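/- Let H̃ ∈ Ω_{4n} be an invertible Hermitian complex matrix and B̃ ∈ Ω_{4n} an H̃-selfadjoint matrix whose spectrum (as a 4n×4n complex matrix) contains no real numbers. Then for every positive integer m there exists an H̃-selfadjoint matrix Ã ∈ Ω_{4n} with Ã^m = B̃. -/

import Mathlib

open Matrix

noncomputable section

/-- The `k×k` upper-triangular Jordan block with eigenvalue `lam`. -/
def jordanBlock {R : Type*} [Zero R] [One R] (lam : R) (k : ℕ) : Matrix (Fin k) (Fin k) R :=
  Matrix.of fun i j => if (i : ℕ) = (j : ℕ) then lam else if (i : ℕ) + 1 = (j : ℕ) then 1 else 0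

/-- The `k×k` sip matrix: ones on the main anti-diagonal, zeros elsewhere. -/
def sip (R : Type*) [Zero R] [One R] (k : ℕ) : Matrix (Fin k) (Fin k) R :=
  Matrix.of fun i j => if (i : ℕ) + (j : ℕ) = k - 1 then 1 else 0

/-- The order-preserving identification of `Fin k ⊕ Fin k` with `Fin (2*k)`. -/
def finTwoMul (k : ℕ) : (Fin k ⊕ Fin k) ≃ Fin (2 * k) :=
  finSumFinEquiv.trans (finCongr (two_mul k).symm)

/-- Block-diagonal direct sum `M ⊕ N` of two `k×k` matrices, as a `(2k)×(2k)` matrix. -/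
def dsum2 {R : Type*} [Zero R] {k : ℕ} (M N : Matrix (Fin k) (Fin k) R) :
    Matrix (Fin (2 * k)) (Fin (2 * k)) R :=
  Matrix.reindex (finTwoMul k) (finTwoMul k) (Matrix.fromBlocks M 0 0 N)

/-- The `2n×2n` complex matrix `[[A₁, conj A₂], [−A₂, conj A₁]]`. -/
def omegaMap {n : ℕ} (A₁ A₂ : Matrix (Fin n) (Fin n) ℂ) :
    Matrix (Fin (2 * n)) (Fin (2 * n)) ℂ :=
  Matrix.reindex (finTwoMul n) (finTwoMul n)
    (Matrix.fromBlocks A₁ (A₂.map (starRingEnd ℂ)) (-A₂) (A₁.map (starRingEnd ℂ)))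

/-- Membership in the real subalgebra `Ω_{2n}` of `2n×2n` complex matrices. -/
def InOmega {n : ℕ} (M : Matrix (Fin (2 * n)) (Fin (2 * n)) ℂ) : Prop :=
  ∃ A₁ A₂ : Matrix (Fin n) (Fin n) ℂ, M = omegaMap A₁ A₂


open Polynomial in
lemma bin_aux {R : Type*} [CommRing R] (x y : R) (k : ℕ) : ∃ c : R,
    (x + y) ^ (k + 1) = x ^ (k + 1) + ((k : R) + 1) * x ^ k * y + y ^ 2 * c := by
  induction k with
  | zero => exact ⟨0, by ring⟩
  | succ k ih =>
    obtain ⟨c, hc⟩ := ih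
    refine ⟨((k : R) + 1) * x ^ k + c * (x + y), ?_⟩
    rw [pow_succ, hc]
    push_cast
    ring

open Polynomial in
lemma eval_map_conj (f : Polynomial ℂ) (z : ℂ) :
    (f.map (starRingEnd ℂ)).eval ((starRingEnd ℂ) z) = (starRingEnd ℂ) (f.eval z) := by
  rw [eval_map, eval₂_hom]

open Polynomial in
lemma base_case (m : ℕ) (hm : 0 < m) (Q : Polynomial ℝ) (hQ0 : Q ≠ 0) (hsf : Squarefree Q)
    (hroots : ∀ z : ℂ, (Polynomial.aeval z) Q = 0 → z.im ≠ 0) :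
    ∃ p : Polynomial ℝ, Q ∣ p ^ m - X := by
  classical
  set Qc : Polynomial ℂ := Q.map (algebraMap ℝ ℂ) with hQc
  have hQc0 : Qc ≠ 0 := Polynomial.map_ne_zero hQ0
  have hev : ∀ z : ℂ, (Polynomial.aeval z) Q = Qc.eval z := by
    intro z; rw [hQc, eval_map, aeval_def]
  have hQcconj : Qc.map (starRingEnd ℂ) = Qc := by
    rw [hQc, Polynomial.map_map]
    congr 1
    exact RingHom.ext fun r => by simp
  have hsep : Qc.Separable := ((PerfectField.separable_iff_squarefree).mpr hsf).map
  have hnodup : Qc.roots.Nodup := Polynomial.nodup_roots hsep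
  set t : Finset ℂ := Qc.roots.toFinset with ht
  have hmemroot : ∀ z ∈ t, Qc.eval z = 0 := by
    intro z hz
    rw [ht, Multiset.mem_toFinset, mem_roots hQc0] at hz
    exact hz
  have hnonreal : ∀ z ∈ t, z.im ≠ 0 := fun z hz => hroots z ((hev z).symm ▸ hmemroot z hz)
  have hconjmem : ∀ z ∈ t, (starRingEnd ℂ) z ∈ t := by
    intro z hz
    rw [ht, Multiset.mem_toFinset, mem_roots hQc0]
    have : Qc.eval ((starRingEnd ℂ) z) = (starRingEnd ℂ) (Qc.eval z) := by
      conv_lhs => rw [← hQcconj]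
      exact eval_map_conj Qc z
    rw [IsRoot.def, this, hmemroot z hz, map_zero]
  set φ : ℂ → ℂ := fun z => Complex.exp (Complex.log z / (m : ℂ)) with hφ
  have hφconj : ∀ z : ℂ, z.im ≠ 0 → (starRingEnd ℂ) (φ z) = φ ((starRingEnd ℂ) z) := by
    intro z hz
    have harg : z.arg ≠ Real.pi := by
      intro h
      exact hz (Complex.arg_eq_pi_iff.mp h).2
    rw [hφ]
    simp only
    rw [← Complex.exp_conj, map_div₀, map_natCast, Complex.log_conj z harg]
  have hφpow : ∀ z : ℂ, z.im ≠ 0 → (φ z) ^ m = z := by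
    intro z hz
    have hz0 : z ≠ 0 := fun h => hz (by simp [h])
    rw [hφ]
    simp only
    rw [← Complex.exp_nat_mul, mul_div_cancel₀ _ (Nat.cast_ne_zero.mpr hm.ne' : (m : ℂ) ≠ 0),
      Complex.exp_log hz0]
  have hinj : Set.InjOn id (t : Set ℂ) := Function.injective_id.injOn
  set P : Polynomial ℂ := Lagrange.interpolate t id φ with hP
  have hPeval : ∀ z ∈ t, P.eval z = φ z := by
    intro z hz
    have := Lagrange.eval_interpolate_at_node φ hinj hz
    exact this
  -- realness
  have hPconj : P.map (starRingEnd ℂ) = P := by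
    have hdeg : (P.map (starRingEnd ℂ)).degree < t.card := by
      rw [degree_map]
      exact Lagrange.degree_interpolate_lt _ hinj
    have hevals : ∀ z ∈ t, (P.map (starRingEnd ℂ)).eval (id z) = φ z := by
      intro z hz
      have h1 : (P.map (starRingEnd ℂ)).eval z
          = (starRingEnd ℂ) (P.eval ((starRingEnd ℂ) z)) := by
        conv_lhs => rw [show z = (starRingEnd ℂ) ((starRingEnd ℂ) z) by simp]
        exact eval_map_conj P _
      rw [id_eq, h1, hPeval _ (hconjmem z hz), hφconj _ (by simpa using hnonreal z hz)]
      simp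
    exact Lagrange.eq_interpolate_of_eval_eq _ hinj hdeg hevals
  obtain ⟨p, hpmap⟩ : ∃ p : Polynomial ℝ, p.map (algebraMap ℝ ℂ) = P := by
    rw [← Polynomial.mem_lifts]
    rw [Polynomial.lifts_iff_coeff_lifts]
    intro i
    have : (starRingEnd ℂ) (P.coeff i) = P.coeff i := by
      have h2 := congrArg (fun f => Polynomial.coeff f i) hPconj
      simpa [coeff_map] using h2
    obtain ⟨r, hr⟩ := Complex.conj_eq_iff_real.mp this
    exact ⟨r, by simp [hr]⟩
  -- divisibility over ℂ
  have hdvdC : Qc ∣ P ^ m - X := by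
    have hsplit := IsAlgClosed.splits Qc
    have heq := hsplit.eq_prod_roots
    have hprodeq : (Qc.roots.map fun a => X - C a).prod = ∏ a ∈ t, (X - C a) := by
      rw [ht, Finset.prod_eq_multiset_prod, Multiset.toFinset_val,
        Multiset.dedup_eq_self.mpr hnodup]
    have hproddvd : (∏ a ∈ t, (X - C a)) ∣ P ^ m - X := by
      apply Finset.prod_dvd_of_coprime
      · exact (Polynomial.pairwise_coprime_X_sub_C Function.injective_id).set_pairwise _
      · intro a ha
        rw [dvd_iff_isRoot, IsRoot.def, eval_sub, eval_pow, eval_X, hPeval a ha,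
          hφpow a (hnonreal a ha), sub_self]
    rw [heq, hprodeq, mul_comm]
    have hu : IsUnit (C Qc.leadingCoeff) :=
      Polynomial.isUnit_C.mpr (isUnit_iff_ne_zero.mpr (leadingCoeff_ne_zero.mpr hQc0))
    exact hu.mul_right_dvd.mpr hproddvd
  refine ⟨p, ?_⟩
  rw [← Polynomial.map_dvd_map' (algebraMap ℝ ℂ)]
  rw [Polynomial.map_sub, Polynomial.map_pow, Polynomial.map_X, hpmap]
  exact hdvdC

open Polynomial in
lemma poly_key (m : ℕ) (hm : 0 < m) : ∀ d : ℕ, ∀ Q : Polynomial ℝ, Q.natDegree ≤ d → Q ≠ 0 →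
    (∀ z : ℂ, (Polynomial.aeval z) Q = 0 → z.im ≠ 0) → ∃ p : Polynomial ℝ, Q ∣ p ^ m - X := by
  intro d
  induction d with
  | zero =>
    intro Q hdeg hQ0 _
    have hQC : Q = C (Q.coeff 0) := Polynomial.eq_C_of_natDegree_eq_zero (Nat.le_zero.mp hdeg)
    have : IsUnit Q := by
      rw [hQC]
      exact Polynomial.isUnit_C.mpr
        (isUnit_iff_ne_zero.mpr (fun h => hQ0 (by rw [hQC, h, map_zero])))
    exact ⟨X, this.dvd⟩
  | succ d ih =>
    intro Q hdeg hQ0 hroots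
    by_cases hsf : Squarefree Q
    · exact base_case m hm Q hQ0 hsf hroots
    · obtain ⟨r, hir, hrr⟩ : ∃ r : Polynomial ℝ, Irreducible r ∧ r * r ∣ Q := by
        by_contra hcon
        push_neg at hcon
        exact hsf ((squarefree_iff_irreducible_sq_not_dvd_of_ne_zero hQ0).mpr
          (fun x hx => hcon x hx))
      have hr0 : r ≠ 0 := hir.ne_zero
      obtain ⟨Q', hQ'⟩ : r ∣ Q := (dvd_mul_right r r).trans hrr
      have hQ'0 : Q' ≠ 0 := by
        intro h; rw [h, mul_zero] at hQ'; exact hQ0 hQ'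
      have hrQ' : r ∣ Q' := by
        have h2 : r * r ∣ r * Q' := hQ' ▸ hrr
        exact (mul_dvd_mul_iff_left hr0).mp h2
      have hdeg' : Q'.natDegree ≤ d := by
        have h1 : Q.natDegree = r.natDegree + Q'.natDegree := by
          rw [hQ', Polynomial.natDegree_mul hr0 hQ'0]
        have h2 : 1 ≤ r.natDegree := hir.natDegree_pos
        omega
      have hroots' : ∀ z : ℂ, (Polynomial.aeval z) Q' = 0 → z.im ≠ 0 := by
        intro z hz
        exact hroots z (by simp [hQ', hz])
      obtain ⟨p, hp⟩ := ih Q' hdeg' hQ'0 hroots'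
      obtain ⟨k, rfl⟩ : ∃ k, m = k + 1 := ⟨m - 1, (Nat.succ_pred_eq_of_pos hm).symm⟩
      obtain ⟨g, hg⟩ := hp
      have hg' : p ^ (k + 1) = Q' * g + X := by rw [← hg]; ring
      have hXQ : ¬ (X ∣ Q) := by
        intro hX
        obtain ⟨w, hw⟩ := hX
        have : (Polynomial.aeval (0 : ℂ)) Q = 0 := by
          simp [hw]
        simpa using hroots 0 this
      have hcop : IsCoprime r (((k : Polynomial ℝ) + 1) * p ^ k) := by
        rw [Irreducible.coprime_iff_not_dvd hir]
        intro hdvd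
        rcases hir.prime.2.2 _ _ hdvd with hC | hP
        · have hCk : C ((k : ℝ) + 1) = ((k : Polynomial ℝ) + 1) := by
            simp
          rw [← hCk] at hC
          have hC0 : ((k : ℝ) + 1) ≠ 0 := by positivity
          have hle := Polynomial.natDegree_le_of_dvd hC (Polynomial.C_ne_zero.mpr hC0)
          rw [Polynomial.natDegree_C] at hle
          have := hir.natDegree_pos
          omega
        · have hp' : r ∣ p := hir.prime.dvd_of_dvd_pow hP
          have h1 : r ∣ p ^ (k + 1) := hp'.trans (dvd_pow_self p k.succ_ne_zero)
          have h2 : r ∣ p ^ (k + 1) - X := hrQ'.trans ⟨g, hg⟩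
          have h3 : r ∣ X := (dvd_sub_right h1).mp h2
          have h4 : X ∣ r := (hir.associated_of_dvd Polynomial.irreducible_X h3).symm.dvd
          exact hXQ (h4.trans ⟨Q', hQ'⟩)
      obtain ⟨a, b, hab⟩ := hcop
      obtain ⟨Q'', hQ''⟩ := hrQ'
      obtain ⟨c, hc⟩ := bin_aux p (Q' * (-(b * g))) k
      refine ⟨p + Q' * (-(b * g)), ⟨g * a + Q'' * (b * g) ^ 2 * c, ?_⟩⟩
      rw [hc, hg', hQ']
      rw [hQ'']
      linear_combination (-(r * Q'' * g)) * hab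

section OmegaClosure

open Polynomial

variable {k : ℕ}

local notation "cj" M => Matrix.map M (starRingEnd ℂ)

lemma cj_cj (M : Matrix (Fin k) (Fin k) ℂ) : (cj (cj M)) = M := by
  ext i j; simp [Matrix.map_apply]

lemma omegaMap_mul (A₁ A₂ B₁ B₂ : Matrix (Fin k) (Fin k) ℂ) :
    omegaMap A₁ A₂ * omegaMap B₁ B₂ =
      omegaMap (A₁ * B₁ - (cj A₂) * B₂) (A₂ * B₁ + (cj A₁) * B₂) := by
  unfold omegaMap
  rw [Matrix.reindex_apply, Matrix.reindex_apply, Matrix.reindex_apply,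
    Matrix.submatrix_mul_equiv, Matrix.fromBlocks_multiply]
  congr 1
  rw [show A₁ * B₁ + (cj A₂) * -B₂ = A₁ * B₁ - (cj A₂) * B₂ by
        rw [Matrix.mul_neg, sub_eq_add_neg],
     show A₁ * (cj B₂) + (cj A₂) * (cj B₁) = cj (A₂ * B₁ + (cj A₁) * B₂) by
        ext i j
        simp [Matrix.map_apply, Matrix.mul_apply, Matrix.add_apply, map_sum, _root_.map_mul]
        exact add_comm _ _,
     show -A₂ * B₁ + (cj A₁) * -B₂ = -(A₂ * B₁ + (cj A₁) * B₂) by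
        rw [Matrix.mul_neg, Matrix.neg_mul, neg_add],
     show -A₂ * (cj B₂) + (cj A₁) * (cj B₁) = cj (A₁ * B₁ - (cj A₂) * B₂) by
        ext i j
        simp [Matrix.map_apply, Matrix.mul_apply, Matrix.sub_apply, Matrix.add_apply,
          Matrix.neg_apply, map_sum, _root_.map_mul, sub_eq_add_neg, Finset.sum_neg_distrib]
        exact add_comm _ _]

lemma omegaMap_add (A₁ A₂ B₁ B₂ : Matrix (Fin k) (Fin k) ℂ) :
    omegaMap A₁ A₂ + omegaMap B₁ B₂ = omegaMap (A₁ + B₁) (A₂ + B₂) := by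
  unfold omegaMap
  rw [Matrix.reindex_apply, Matrix.reindex_apply, Matrix.reindex_apply]
  have : ∀ (M N : Matrix (Fin k ⊕ Fin k) (Fin k ⊕ Fin k) ℂ),
      M.submatrix (finTwoMul k).symm (finTwoMul k).symm
        + N.submatrix (finTwoMul k).symm (finTwoMul k).symm
      = (M + N).submatrix (finTwoMul k).symm (finTwoMul k).symm := fun _ _ => rfl
  rw [this, Matrix.fromBlocks_add]
  congr 1
  rw [show ((cj A₂) + (cj B₂)) = cj (A₂ + B₂) by ext i j; simp [Matrix.map_apply],
    show -A₂ + -B₂ = -(A₂ + B₂) from (neg_add A₂ B₂).symm,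
    show ((cj A₁) + (cj B₁)) = cj (A₁ + B₁) by ext i j; simp [Matrix.map_apply]]

lemma omegaMap_one : (omegaMap (1 : Matrix (Fin k) (Fin k) ℂ) 0) = 1 := by
  unfold omegaMap
  rw [Matrix.reindex_apply]
  have h1 : ((1 : Matrix (Fin k) (Fin k) ℂ).map (starRingEnd ℂ)) = 1 :=
    Matrix.map_one _ (map_zero _) (map_one _)
  have h0 : ((0 : Matrix (Fin k) (Fin k) ℂ).map (starRingEnd ℂ)) = 0 :=
    Matrix.map_zero _ (map_zero _)
  rw [h1, h0, neg_zero, Matrix.fromBlocks_one, Matrix.submatrix_one_equiv]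

lemma omegaMap_smul (c : ℝ) (A₁ A₂ : Matrix (Fin k) (Fin k) ℂ) :
    c • omegaMap A₁ A₂ = omegaMap (c • A₁) (c • A₂) := by
  unfold omegaMap
  rw [Matrix.reindex_apply, Matrix.reindex_apply]
  have hsub : ∀ (M : Matrix (Fin k ⊕ Fin k) (Fin k ⊕ Fin k) ℂ),
      c • M.submatrix (finTwoMul k).symm (finTwoMul k).symm
      = (c • M).submatrix (finTwoMul k).symm (finTwoMul k).symm := fun _ => rfl
  have hcj : ∀ (M : Matrix (Fin k) (Fin k) ℂ), (c • (cj M)) = cj (c • M) := by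
    intro M
    ext i j
    simp [Matrix.map_apply, Complex.real_smul, _root_.map_mul, Complex.conj_ofReal]
  rw [hsub]
  congr 1
  rw [Matrix.fromBlocks_smul, hcj, hcj, smul_neg]

lemma InOmega.mul {M N : Matrix (Fin (2 * k)) (Fin (2 * k)) ℂ}
    (hM : InOmega M) (hN : InOmega N) : InOmega (M * N) := by
  obtain ⟨A₁, A₂, rfl⟩ := hM
  obtain ⟨B₁, B₂, rfl⟩ := hN
  exact ⟨_, _, omegaMap_mul A₁ A₂ B₁ B₂⟩

lemma InOmega.add {M N : Matrix (Fin (2 * k)) (Fin (2 * k)) ℂ}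
    (hM : InOmega M) (hN : InOmega N) : InOmega (M + N) := by
  obtain ⟨A₁, A₂, rfl⟩ := hM
  obtain ⟨B₁, B₂, rfl⟩ := hN
  exact ⟨_, _, (omegaMap_add A₁ A₂ B₁ B₂)⟩

lemma InOmega.one : InOmega (1 : Matrix (Fin (2 * k)) (Fin (2 * k)) ℂ) :=
  ⟨1, 0, omegaMap_one.symm⟩

lemma InOmega.smul {M : Matrix (Fin (2 * k)) (Fin (2 * k)) ℂ} (c : ℝ)
    (hM : InOmega M) : InOmega (c • M) := by
  obtain ⟨A₁, A₂, rfl⟩ := hM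
  exact ⟨_, _, omegaMap_smul c A₁ A₂⟩

lemma InOmega.pow {M : Matrix (Fin (2 * k)) (Fin (2 * k)) ℂ}
    (hM : InOmega M) (i : ℕ) : InOmega (M ^ i) := by
  induction i with
  | zero => exact (pow_zero M) ▸ InOmega.one
  | succ i ih => rw [pow_succ]; exact ih.mul hM

lemma InOmega.aeval {M : Matrix (Fin (2 * k)) (Fin (2 * k)) ℂ}
    (hM : InOmega M) (p : Polynomial ℝ) : InOmega ((Polynomial.aeval M) p) := by
  induction p using Polynomial.induction_on' with
  | add p q hp hq => rw [map_add]; exact hp.add hq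
  | monomial i c =>
    rw [Polynomial.aeval_monomial, Algebra.algebraMap_eq_smul_one, smul_mul_assoc, one_mul]
    exact (hM.pow i).smul c

section SA

variable {N' : Type*} [Fintype N'] [DecidableEq N']

lemma sa_pow (H B : Matrix N' N' ℂ) (h : H * B = Bᴴ * H) (i : ℕ) :
    H * B ^ i = (Bᴴ) ^ i * H := by
  induction i with
  | zero => simp
  | succ i ih =>
    rw [pow_succ, pow_succ, ← mul_assoc, ih, mul_assoc, h, ← mul_assoc]

lemma sa_aeval (H B : Matrix N' N' ℂ) (h : H * B = Bᴴ * H) (p : Polynomial ℝ) :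
    H * (Polynomial.aeval B) p = ((Polynomial.aeval B) p)ᴴ * H := by
  induction p using Polynomial.induction_on' with
  | add p q hp hq => rw [map_add, mul_add, Matrix.conjTranspose_add, add_mul, hp, hq]
  | monomial i c =>
    rw [Polynomial.aeval_monomial, Algebra.algebraMap_eq_smul_one, smul_mul_assoc, one_mul,
      mul_smul_comm, sa_pow H B h i, Matrix.conjTranspose_smul, Matrix.conjTranspose_pow,
      star_trivial, smul_mul_assoc]

lemma mem_spectrum_of_root (B : Matrix N' N' ℂ) {μ : ℂ} (h : B.charpoly.eval μ = 0) :
    μ ∈ spectrum ℂ B := by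
  rw [spectrum.mem_iff]
  intro hu
  have hdet : IsUnit (algebraMap ℂ (Matrix N' N' ℂ) μ - B).det :=
    (Matrix.isUnit_iff_isUnit_det _).mp hu
  have halg : algebraMap ℂ (Matrix N' N' ℂ) μ = Matrix.scalar N' μ := by
    rw [Matrix.algebraMap_eq_diagonal, Matrix.scalar_apply]
    congr 1
  have heval : B.charpoly.eval μ = (algebraMap ℂ (Matrix N' N' ℂ) μ - B).det := by
    rw [Matrix.charpoly, eval_det, matPolyEquiv_charmatrix, halg]
    congr 1
    rw [Polynomial.eval_sub, Polynomial.eval_X, Polynomial.eval_C]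
  rw [heval] at h
  rw [h] at hdet
  exact (not_isUnit_zero : ¬ IsUnit (0 : ℂ)) hdet

end SA
end OmegaClosure

/-- **Theorem 3.4.** An `H̃`-selfadjoint matrix in `Ω_{4n}` whose spectrum contains no real
numbers has an `H̃`-selfadjoint `m`th root in `Ω_{4n}`. -/
theorem exists_root_nonreal_spectrum {n : ℕ} (m : ℕ) (hm : 0 < m)
    (H B : Matrix (Fin (2 * (2 * n))) (Fin (2 * (2 * n))) ℂ)
    (hHΩ : InOmega H) (hHu : IsUnit H) (hHherm : H.IsHermitian)
    (hBΩ : InOmega B) (hBsa : H * B = Bᴴ * H)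
    (hspec : ∀ μ ∈ spectrum ℂ B, μ.im ≠ 0) :
    ∃ A : Matrix (Fin (2 * (2 * n))) (Fin (2 * (2 * n))) ℂ,
      InOmega A ∧ H * A = Aᴴ * H ∧ A ^ m = B := by
  classical
  set q : Polynomial ℂ := B.charpoly with hq
  have hq0 : q ≠ 0 := B.charpoly_monic.ne_zero
  set qc : Polynomial ℂ := q.map (starRingEnd ℂ) with hqc
  have hqc0 : qc ≠ 0 := Polynomial.map_ne_zero hq0
  set Qc : Polynomial ℂ := q * qc with hQc
  have hQc0 : Qc ≠ 0 := mul_ne_zero hq0 hqc0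
  have hQcconj : Qc.map (starRingEnd ℂ) = Qc := by
    rw [hQc, Polynomial.map_mul, hqc, Polynomial.map_map]
    have hcc : (starRingEnd ℂ).comp (starRingEnd ℂ) = RingHom.id ℂ := RingHom.ext fun z => by simp
    rw [hcc, Polynomial.map_id, mul_comm]
  obtain ⟨Q, hQmap⟩ : ∃ Q : Polynomial ℝ, Q.map (algebraMap ℝ ℂ) = Qc := by
    rw [← Polynomial.mem_lifts, Polynomial.lifts_iff_coeff_lifts]
    intro i
    have h2 := congrArg (fun f => Polynomial.coeff f i) hQcconj
    simp only [Polynomial.coeff_map] at h2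
    obtain ⟨r, hr⟩ := Complex.conj_eq_iff_real.mp h2
    exact ⟨r, by simp [hr]⟩
  have hQ0 : Q ≠ 0 := fun h => hQc0 (by rw [← hQmap, h, Polynomial.map_zero])
  have hroots : ∀ z : ℂ, (Polynomial.aeval z) Q = 0 → z.im ≠ 0 := by
    intro z hz
    have hev : Qc.eval z = 0 := by
      rw [← hQmap, Polynomial.eval_map, ← Polynomial.aeval_def]
      exact hz
    rw [hQc, Polynomial.eval_mul] at hev
    rcases mul_eq_zero.mp hev with h | h
    · exact hspec z (mem_spectrum_of_root B h)
    · have h3 := eval_map_conj q ((starRingEnd ℂ) z)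
      rw [show (starRingEnd ℂ) ((starRingEnd ℂ) z) = z by simp] at h3
      rw [hqc] at h
      rw [h3] at h
      have h2 : q.eval ((starRingEnd ℂ) z) = 0 := by
        have := congrArg (starRingEnd ℂ) h
        simpa using this
      have h4 := hspec _ (mem_spectrum_of_root B h2)
      simp only [Complex.conj_im] at h4
      exact fun hh => h4 (by rw [hh, neg_zero])
  obtain ⟨p, hdvd⟩ := poly_key m hm Q.natDegree Q le_rfl hQ0 hroots
  refine ⟨(Polynomial.aeval B) p, InOmega.aeval hBΩ p, sa_aeval H B hBsa p, ?_⟩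
  obtain ⟨g, hg⟩ := hdvd
  have h1 : (Polynomial.aeval B) (p ^ m - Polynomial.X)
      = ((Polynomial.aeval B) p) ^ m - B := by
    rw [map_sub, map_pow, Polynomial.aeval_X]
  have hQzero : (Polynomial.aeval B) Q = (0 : Matrix _ _ ℂ) := by
    have h2 : (Polynomial.aeval B) Q = (Polynomial.aeval B) Qc := by
      rw [← hQmap, Polynomial.aeval_map_algebraMap]
    rw [h2, hQc, _root_.map_mul, hq, Matrix.aeval_self_charpoly, zero_mul]
  have h3 : (Polynomial.aeval B) (p ^ m - Polynomial.X) = 0 := by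
    rw [hg, _root_.map_mul, hQzero, zero_mul]
  rw [h1] at h3
  exact sub_eq_zero.mp h3

end
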